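/- Let λ ∈ ℝ, let A denote the automorphism of ℝ² given by the action of λ in Sol, i.e. A(x,y) = (e^λ x, e^{−λ} y), and let Λ₀ be a subgroup of ℝ² with A(Λ₀) = Λ₀. Let Λ be the subgroup of Sol generated by Λ₀ × {0} together with the element ((0,0),λ). Then for every v ∈ ℝ², the element (v,0) of Sol belongs to the normalizer of Λ if and only if A v − v ∈ Λ₀. -/

import Mathlib

/-- The action of `λ ∈ ℝ` on `ℝ²` by `(x, y) ↦ (e^λ x, e^{-λ} y)`, as an
additive group automorphism. -/
noncomputable def solAct (l : ℝ) : (ℝ × ℝ) ≃+ (ℝ × ℝ) where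
  toFun p := (Real.exp l * p.1, Real.exp (-l) * p.2)
  invFun p := (Real.exp (-l) * p.1, Real.exp l * p.2)
  left_inv p := by
    refine Prod.ext ?_ ?_ <;> simp [← mul_assoc, ← Real.exp_add]
  right_inv p := by
    refine Prod.ext ?_ ?_ <;> simp [← mul_assoc, ← Real.exp_add]
  map_add' p q := by
    simp [Prod.ext_iff]
    constructor <;> ring

/-- The homomorphism `Multiplicative ℝ →* MulAut (Multiplicative (ℝ × ℝ))`
defining the group `Sol` as a semidirect product. -/
noncomputable def solPhi : Multiplicative ℝ →* MulAut (Multiplicative (ℝ × ℝ)) where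
  toFun l := AddEquiv.toMultiplicative (solAct l.toAdd)
  map_one' := by
    ext p
    all_goals simp [solAct, AddEquiv.toMultiplicative, MulAut.one_apply]
  map_mul' a b := by
    ext p
    all_goals simp [solAct, AddEquiv.toMultiplicative, MulAut.mul_def, MulEquiv.trans_apply,
      Real.exp_add, Prod.ext_iff, toAdd_mul, neg_add]
    all_goals ring

/-- The group `Sol = ℝ² ⋊ ℝ`. -/
noncomputable abbrev Sol : Type := SemidirectProduct (Multiplicative (ℝ × ℝ)) (Multiplicative ℝ) solPhi

lemma solAct_add (a b : ℝ) (p : ℝ × ℝ) : solAct (a + b) p = solAct a (solAct b p) := by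
  simp only [solAct, AddEquiv.coe_mk, Equiv.coe_fn_mk, Real.exp_add, neg_add, Prod.mk.injEq]
  constructor <;> ring

lemma solAct_zero (p : ℝ × ℝ) : solAct 0 p = p := by
  simp [solAct]

lemma solPhi_apply (t : Multiplicative ℝ) (m : Multiplicative (ℝ × ℝ)) :
    solPhi t m = Multiplicative.ofAdd (solAct t.toAdd m.toAdd) := rfl

lemma solAct_iter (l : ℝ) (Λ₀ : AddSubgroup (ℝ × ℝ))
    (hΛ₀ : AddSubgroup.map (solAct l).toAddMonoidHom Λ₀ = Λ₀) :
    ∀ n : ℤ, ∀ w ∈ Λ₀, solAct ((n : ℝ) * l) w ∈ Λ₀ := by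
  have hfwd : ∀ w ∈ Λ₀, solAct l w ∈ Λ₀ := by
    intro w hw
    rw [← hΛ₀]
    exact ⟨w, hw, rfl⟩
  have hbwd : ∀ w ∈ Λ₀, solAct (-l) w ∈ Λ₀ := by
    intro w hw
    rw [← hΛ₀] at hw
    obtain ⟨u, hu, rfl⟩ := hw
    have : solAct (-l) (solAct l u) = u := by
      rw [← solAct_add, neg_add_cancel, solAct_zero]
    simpa [AddEquiv.toAddMonoidHom_eq_coe, this] using hu
  intro n
  induction n using Int.induction_on with
  | zero => intro w hw; simpa [solAct_zero] using hw
  | succ n ih =>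
    intro w hw
    have e : ((n : ℤ) + 1 : ℤ) * l = l + (n : ℝ) * l := by push_cast; ring
    rw [e, solAct_add]
    exact hfwd _ (ih w hw)
  | pred n ih =>
    intro w hw
    have e : ((-(n : ℤ) - 1 : ℤ) : ℝ) * l = -l + ((-(n : ℤ) : ℤ) : ℝ) * l := by push_cast; ring
    rw [e, solAct_add]
    exact hbwd _ (ih w hw)

noncomputable def solH (l : ℝ) (Λ₀ : AddSubgroup (ℝ × ℝ))
    (h : ∀ n : ℤ, ∀ w ∈ Λ₀, solAct ((n : ℝ) * l) w ∈ Λ₀) : Subgroup Sol where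
  carrier := {x | x.left.toAdd ∈ Λ₀ ∧ x.right.toAdd ∈ AddSubgroup.zmultiples l}
  one_mem' := by
    constructor
    · simpa using Λ₀.zero_mem
    · simpa using (AddSubgroup.zmultiples l).zero_mem
  mul_mem' := by
    rintro a b ⟨ha1, ha2⟩ ⟨hb1, hb2⟩
    obtain ⟨n, hn⟩ := AddSubgroup.mem_zmultiples_iff.mp ha2
    constructor
    · have : (a * b).left.toAdd = a.left.toAdd + solAct a.right.toAdd b.left.toAdd := by
        simp [SemidirectProduct.mul_left, solPhi_apply]
      rw [this]
      refine Λ₀.add_mem ha1 ?_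
      rw [← hn, zsmul_eq_mul]
      exact h n _ hb1
    · have : (a * b).right.toAdd = a.right.toAdd + b.right.toAdd := by
        simp [SemidirectProduct.mul_right]
      rw [this]
      exact AddSubgroup.add_mem _ ha2 hb2
  inv_mem' := by
    rintro a ⟨ha1, ha2⟩
    obtain ⟨n, hn⟩ := AddSubgroup.mem_zmultiples_iff.mp ha2
    constructor
    · have : (a⁻¹).left.toAdd = solAct (-a.right.toAdd) (-a.left.toAdd) := by
        rw [SemidirectProduct.inv_left, solPhi_apply]
        simp
      rw [this, ← hn]
      have : -((n : ℤ) • l) = ((-n : ℤ) : ℝ) * l := by push_cast [zsmul_eq_mul]; ring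
      rw [this]
      exact h (-n) _ (Λ₀.neg_mem ha1)
    · have : (a⁻¹).right.toAdd = -a.right.toAdd := by simp
      rw [this]
      exact AddSubgroup.neg_mem _ ha2

lemma mem_solH (l : ℝ) (Λ₀ : AddSubgroup (ℝ × ℝ)) (h) (x : Sol) :
    x ∈ solH l Λ₀ h ↔ x.left.toAdd ∈ Λ₀ ∧ x.right.toAdd ∈ AddSubgroup.zmultiples l := Iff.rfl

set_option maxHeartbeats 1000000 in
lemma closure_eq_solH (l : ℝ) (Λ₀ : AddSubgroup (ℝ × ℝ))
    (hΛ₀ : AddSubgroup.map (solAct l).toAddMonoidHom Λ₀ = Λ₀) :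
    Subgroup.closure
      ((SemidirectProduct.inl : Multiplicative (ℝ × ℝ) →* Sol) ''
          (Multiplicative.ofAdd '' (Λ₀ : Set (ℝ × ℝ))) ∪
        {SemidirectProduct.inr (Multiplicative.ofAdd l)}) =
      solH l Λ₀ (solAct_iter l Λ₀ hΛ₀) := by
  apply le_antisymm
  · rw [Subgroup.closure_le]
    rintro x (⟨m, ⟨w, hw, rfl⟩, rfl⟩ | rfl)
    · exact ⟨by simpa using hw, by simpa using (AddSubgroup.zmultiples l).zero_mem⟩
    · refine ⟨by simpa using Λ₀.zero_mem, ?_⟩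
      simpa using AddSubgroup.mem_zmultiples l
  · intro x hx
    obtain ⟨h1, h2⟩ := hx
    rw [← SemidirectProduct.inl_left_mul_inr_right x]
    refine Subgroup.mul_mem _ ?_ ?_
    · apply Subgroup.subset_closure
      exact Or.inl ⟨x.left, ⟨x.left.toAdd, h1, by simp⟩, rfl⟩
    · obtain ⟨n, hn⟩ := AddSubgroup.mem_zmultiples_iff.mp h2
      have : x.right = (Multiplicative.ofAdd l) ^ n := by
        rw [← ofAdd_toAdd x.right, ← hn]
        simp [← ofAdd_zsmul]
      rw [this, map_zpow]
      refine zpow_mem ?_ n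
      exact Subgroup.subset_closure (Set.mem_union_right _ rfl)


/-- Let `Λ₀ ⊆ ℝ²` be a subgroup invariant under the automorphism
`A = solAct λ`, and let `Λ ⊆ Sol` be the subgroup generated by `Λ₀ × {0}` and
`((0,0), λ)`. Then for `v ∈ ℝ²`, the element `(v, 0)` of `Sol` normalizes `Λ`
if and only if `A v - v ∈ Λ₀`. -/
theorem sol_mem_normalizer_iff (l : ℝ) (Λ₀ : AddSubgroup (ℝ × ℝ))
    (hΛ₀ : AddSubgroup.map (solAct l).toAddMonoidHom Λ₀ = Λ₀)
    (Λ : Subgroup Sol)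
    (hΛ : Λ = Subgroup.closure
      ((SemidirectProduct.inl : Multiplicative (ℝ × ℝ) →* Sol) ''
          (Multiplicative.ofAdd '' (Λ₀ : Set (ℝ × ℝ))) ∪
        {SemidirectProduct.inr (Multiplicative.ofAdd l)}))
    (v : ℝ × ℝ) :
    (SemidirectProduct.inl (Multiplicative.ofAdd v) : Sol) ∈ Subgroup.normalizer (Λ : Set Sol) ↔
      solAct l v - v ∈ Λ₀ := by
  have hH : Λ = solH l Λ₀ (solAct_iter l Λ₀ hΛ₀) := hΛ.trans (closure_eq_solH l Λ₀ hΛ₀)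
  subst hH
  set g : Sol := SemidirectProduct.inl (Multiplicative.ofAdd v) with hg
  have hconj_right : ∀ x : Sol, (g * x * g⁻¹).right = x.right := by
    intro x; simp [hg]
  have hconj_left : ∀ x : Sol,
      (g * x * g⁻¹).left.toAdd = x.left.toAdd + (v - solAct x.right.toAdd v) := by
    intro x
    rw [SemidirectProduct.mul_left, SemidirectProduct.mul_left]
    rw [SemidirectProduct.inv_left]
    simp only [hg, SemidirectProduct.left_inl, SemidirectProduct.right_inl,
      SemidirectProduct.mul_right, one_mul, inv_one, map_one, MulAut.one_apply]
    rw [solPhi_apply]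
    simp only [toAdd_mul, toAdd_ofAdd, toAdd_inv]
    rw [map_neg]
    abel
  rw [Subgroup.mem_normalizer_iff]
  constructor
  · intro hmem
    have hx : (SemidirectProduct.inr (Multiplicative.ofAdd l) : Sol) ∈
        solH l Λ₀ (solAct_iter l Λ₀ hΛ₀) := by
      refine ⟨by simpa using Λ₀.zero_mem, ?_⟩
      simpa using AddSubgroup.mem_zmultiples l
    have hc := (hmem _).mp hx
    have h1 := hc.1
    rw [hconj_left] at h1
    simp only [SemidirectProduct.left_inr, SemidirectProduct.right_inr, toAdd_one,
      toAdd_ofAdd, zero_add] at h1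
    simpa [neg_sub] using Λ₀.neg_mem h1
  · intro hv
    have claim : ∀ n : ℤ, solAct ((n : ℝ) * l) v - v ∈ Λ₀ := by
      intro n
      induction n using Int.induction_on with
      | zero => simpa [solAct_zero] using Λ₀.zero_mem
      | succ n ih =>
        have e : (((n : ℤ) + 1 : ℤ) : ℝ) * l = l + (n : ℝ) * l := by push_cast; ring
        have key : solAct (l + (n : ℝ) * l) v - v =
            solAct l (solAct ((n : ℝ) * l) v - v) + (solAct l v - v) := by
          rw [solAct_add, map_sub]
          abel
        rw [e, key]
        exact Λ₀.add_mem (by simpa using solAct_iter l Λ₀ hΛ₀ 1 _ ih) hv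
      | pred n ih =>
        have e : ((-(n : ℤ) - 1 : ℤ) : ℝ) * l = -l + ((-(n : ℤ) : ℤ) : ℝ) * l := by
          push_cast; ring
        have key : solAct (-l + ((-(n : ℤ) : ℤ) : ℝ) * l) v - v =
            solAct (-l) ((solAct ((((-(n : ℤ) : ℤ)) : ℝ) * l) v - v) - (solAct l v - v)) := by
          have h2 : solAct (-l) (solAct l v) = v := by
            rw [← solAct_add, neg_add_cancel, solAct_zero]
          rw [solAct_add, map_sub, map_sub, map_sub, h2]
          abel
        rw [e, key]
        have := solAct_iter l Λ₀ hΛ₀ (-1) _ (Λ₀.sub_mem ih hv)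
        simpa using this
    have hz : ∀ t ∈ AddSubgroup.zmultiples l, v - solAct t v ∈ Λ₀ := by
      intro t ht
      obtain ⟨n, hn⟩ := AddSubgroup.mem_zmultiples_iff.mp ht
      have : t = (n : ℝ) * l := by rw [← hn, zsmul_eq_mul]
      rw [this]
      simpa [neg_sub] using Λ₀.neg_mem (claim n)
    intro x
    constructor
    · rintro ⟨h1, h2⟩
      refine ⟨?_, by rw [hconj_right]; exact h2⟩
      rw [hconj_left]
      exact Λ₀.add_mem h1 (hz _ h2)
    · rintro ⟨h1, h2⟩
      rw [hconj_right] at h2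
      refine ⟨?_, h2⟩
      rw [hconj_left] at h1
      simpa using Λ₀.sub_mem h1 (hz _ h2)
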